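/- arXiv:1901.05443 — 6 statements merged into one kernel-verified Lean document; each statement's English description precedes it below -/
import Mathlib

section
/- Let X₁ ⊆ X₀ ⊆ X be a dense nest of Banach spaces. Let U, V ⊆ X₀ be open, T : V → U a map with T(V ∩ X₁) ⊆ X₁, G : U → ℝ, and H = G ∘ T. (a) Let v₀ ∈ V ∩ X₁ and u₀ = T(v₀). Assume: there is A ∈ L(X) mapping X₁ into X₀ such that the restriction of T to V ∩ X₁ is differentiable at v₀ along X₁ into X₀ with derivative z ↦ A z; G is differentiable at u₀ along X₀ with X-extended derivative ℓ ∈ L(X,ℝ); and H is differentiable at v₀ along X₀ with X-extended derivative m ∈ L(X,ℝ). Then m = ℓ ∘ A. (b) Suppose moreover that V ∩ X₁ is dense in V (X₀-norm), T is continuous from V to U (X₀-topologies), the hypotheses of (a) hold at every point of V ∩ X₁, at every v ∈ V the maps T and H are differentiable along X₀ with X-extended derivatives A(v) ∈ L(X) and m(v) ∈ L(X,ℝ), at every u ∈ U the map G is differentiable along X₀ with X-extended derivative ℓ(u) ∈ L(X,ℝ), and the assignments v ↦ A(v), v ↦ m(v), u ↦ ℓ(u) are continuous in operator norm (domains with the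 X₀-topology). Then m(v) = ℓ(T(v)) ∘ A(v) for every v ∈ V. -/
open Set Filter Topology Asymptotics

/-- Chart-level formulation of Lemma 2.5, assertions (2) and (3): the chain relation (2.7)
for the `X`-extended derivatives of a real-valued function under composition with a chart
transition, (a) at points of the inner kernel `X₁`, and (b) by density and continuity, at
every point of `V`. -/
theorem real_valued_chain_relation
    {X X₀ X₁ : Type*}
    [NormedAddCommGroup X] [NormedSpace ℝ X] [CompleteSpace X]
    [NormedAddCommGroup X₀] [NormedSpace ℝ X₀] [CompleteSpace X₀]
    [NormedAddCommGroup X₁] [NormedSpace ℝ X₁] [CompleteSpace X₁]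
    -- the dense nest X₁ ⊆ X₀ ⊆ X
    (ι₀ : X₀ →L[ℝ] X) (hι₀inj : Function.Injective ι₀) (hι₀dense : DenseRange ι₀)
    (ι₁ : X₁ →L[ℝ] X₀) (hι₁inj : Function.Injective ι₁) (hι₁dense : DenseRange ι₁)
    (U V : Set X₀) (hU : IsOpen U) (hV : IsOpen V)
    (T : X₀ → X₀) (hT : MapsTo T V U)
    (hT₁ : MapsTo T (V ∩ range ι₁) (range ι₁))
    (G : X₀ → ℝ) :
    -- part (a): at a point v₀ = ι₁ v₁ of V ∩ X₁
    ((∀ v₁ : X₁, ι₁ v₁ ∈ V →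
        ∀ (A : X →L[ℝ] X) (BA : X₁ →L[ℝ] X₀),
          ι₀.comp BA = (A.comp ι₀).comp ι₁ →
          HasFDerivWithinAt (fun z : X₁ => T (ι₁ z)) BA (ι₁ ⁻¹' V) v₁ →
          ∀ ℓ m : X →L[ℝ] ℝ,
            HasFDerivWithinAt G (ℓ.comp ι₀) U (T (ι₁ v₁)) →
            HasFDerivWithinAt (fun y => G (T y)) (m.comp ι₀) V (ι₁ v₁) →
            m = ℓ.comp A)
     ∧
     -- part (b): at every point of V, by density of V ∩ X₁ and continuity
     (V ⊆ closure (V ∩ range ι₁) →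
      ContinuousOn T V →
      ∀ (A : X₀ → (X →L[ℝ] X)) (m ℓ : X₀ → (X →L[ℝ] ℝ)),
        (∀ v ∈ V, HasFDerivWithinAt (fun y => ι₀ (T y)) ((A v).comp ι₀) V v) →
        (∀ v ∈ V, HasFDerivWithinAt (fun y => G (T y)) ((m v).comp ι₀) V v) →
        (∀ u ∈ U, HasFDerivWithinAt G ((ℓ u).comp ι₀) U u) →
        ContinuousOn A V → ContinuousOn m V → ContinuousOn ℓ U →
        (∀ v₁ : X₁, ι₁ v₁ ∈ V → ∃ BA : X₁ →L[ℝ] X₀,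
          ι₀.comp BA = ((A (ι₁ v₁)).comp ι₀).comp ι₁ ∧
          HasFDerivWithinAt (fun z : X₁ => T (ι₁ z)) BA (ι₁ ⁻¹' V) v₁) →
        ∀ v ∈ V, m v = (ℓ (T v)).comp (A v))) := by
  have parta : ∀ v₁ : X₁, ι₁ v₁ ∈ V →
        ∀ (A : X →L[ℝ] X) (BA : X₁ →L[ℝ] X₀),
          ι₀.comp BA = (A.comp ι₀).comp ι₁ →
          HasFDerivWithinAt (fun z : X₁ => T (ι₁ z)) BA (ι₁ ⁻¹' V) v₁ →
          ∀ ℓ m : X →L[ℝ] ℝ,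
            HasFDerivWithinAt G (ℓ.comp ι₀) U (T (ι₁ v₁)) →
            HasFDerivWithinAt (fun y => G (T y)) (m.comp ι₀) V (ι₁ v₁) →
            m = ℓ.comp A := by
    intro v₁ hv₁ A BA hBA hTd ℓ m hG hH
    have hmaps : MapsTo (fun z : X₁ => T (ι₁ z)) (ι₁ ⁻¹' V) U := fun z hz => hT hz
    have hcomp : HasFDerivWithinAt (fun z : X₁ => G (T (ι₁ z)))
        ((ℓ.comp ι₀).comp BA) (ι₁ ⁻¹' V) v₁ := hG.comp v₁ hTd hmaps
    have hmaps₁ : MapsTo ι₁ (ι₁ ⁻¹' V) V := fun z hz => hz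
    have hι₁d : HasFDerivWithinAt (fun z : X₁ => ι₁ z) (ι₁ : X₁ →L[ℝ] X₀)
        (ι₁ ⁻¹' V) v₁ := ι₁.hasFDerivAt.hasFDerivWithinAt
    have hcomp' : HasFDerivWithinAt (fun z : X₁ => G (T (ι₁ z)))
        ((m.comp ι₀).comp ι₁) (ι₁ ⁻¹' V) v₁ := hH.comp v₁ hι₁d hmaps₁
    have hopen : IsOpen (ι₁ ⁻¹' V) := hV.preimage ι₁.continuous
    have hud : UniqueDiffWithinAt ℝ (ι₁ ⁻¹' V) v₁ := hopen.uniqueDiffWithinAt hv₁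
    have heq : (m.comp ι₀).comp ι₁ = (ℓ.comp ι₀).comp BA := hud.eq hcomp' hcomp
    have hdense2 : DenseRange (ι₀ ∘ ι₁) := hι₀dense.comp hι₁dense ι₀.continuous
    have hfun : (m : X → ℝ) = (ℓ.comp A : X → ℝ) := by
      apply Continuous.ext_on hdense2 m.continuous (ℓ.comp A).continuous
      rintro _ ⟨x, rfl⟩
      have h1 : (m.comp ι₀).comp ι₁ x = (ℓ.comp ι₀).comp BA x := by rw [heq]
      have h2 : ι₀ (BA x) = A (ι₀ (ι₁ x)) := by
        have := congrFun (congrArg (fun f : X₁ →L[ℝ] X => (f : X₁ → X)) hBA) x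
        simpa using this
      simpa [Function.comp, h2] using h1
    exact ContinuousLinearMap.coeFn_injective hfun
  refine ⟨parta, ?_⟩
  intro hVd hTc A m ℓ hA hm hℓ hAc hmc hℓc hBA v hv
  have key : ∀ w ∈ V ∩ range ι₁, m w = (ℓ (T w)).comp (A w) := by
    rintro w ⟨hwV, x, rfl⟩
    obtain ⟨BA, hBAeq, hBAd⟩ := hBA x hwV
    exact parta x hwV (A (ι₁ x)) BA hBAeq hBAd (ℓ (T (ι₁ x))) (m (ι₁ x))
      (hℓ _ (hT hwV)) (hm _ hwV)
  set F : X₀ → (X →L[ℝ] ℝ) := fun w => m w - (ℓ (T w)).comp (A w) with hF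
  have hFc : ContinuousOn F V := by
    apply ContinuousOn.sub hmc
    exact ContinuousOn.clm_comp (hℓc.comp hTc hT) hAc
  have hvcl : v ∈ closure (V ∩ range ι₁) := hVd hv
  haveI : (𝓝[V ∩ range ι₁] v).NeBot := mem_closure_iff_nhdsWithin_neBot.mp hvcl
  have h1 : Tendsto F (𝓝[V ∩ range ι₁] v) (𝓝 (F v)) :=
    (hFc v hv).mono inter_subset_left
  have h0 : Tendsto F (𝓝[V ∩ range ι₁] v) (𝓝 0) := by
    refine tendsto_const_nhds.congr' ?_
    filter_upwards [self_mem_nhdsWithin] with w hw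
    have := key w hw
    simp [hF, this]
  have : F v = 0 := tendsto_nhds_unique h1 h0
  have := sub_eq_zero.mp this
  exact this
end

section
/- Let X₁ ⊆ X₀ ⊆ X be a dense nest of Banach spaces. Let W, U, V ⊆ X₀ be open and let S : W → U and Q : U → V be bijections such that S, Q and Q∘S are differentiable along X₀ (into X) at every point of their domains with X-extended derivatives A_S(w), A_Q(u), A_{Q∘S}(w) ∈ L(X), these assignments are continuous into L(X) (domains with the X₀-topology), S and Q map the X₁-parts of their domains into X₁ with W ∩ X₁ dense in W and U ∩ X₁ dense in U, and at points of the X₁-parts the restrictions of S and Q are differentiable along X₁ into X₀ with derivatives given by restricting A_S, A_Q (in particular, A_{Q∘S}(w) = A_Q(S(w)) ∘ A_S(w) for all w ∈ W). Let ε > 0, w₀ ∈ W, and let c : (−ε, ε) → W be a curve with c(0) = w₀ that is differentiable at t = 0 as a map into X₀. Then S∘c and (Q∘S)∘c are differentiable at t = 0 as maps into X, and ((Q∘S)∘c)'(0) = A_Q(S(w₀))((S∘c)'(0)). -/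
open Set Filter Topology Asymptotics

/-- Chart-level formulation of Lemma 2.7: a curve in `X₀` through `w₀` that is
differentiable at `t = 0` into `X₀` has, after composition with the regular transitions
`S` and `Q ∘ S`, representations differentiable at `t = 0` into `X`, and the derivatives
are related by the `X`-extended transition derivative: `((Q∘S)∘c)'(0) = A_Q(S w₀)((S∘c)'(0))`. -/
theorem curve_fully_differentiable
    {X X₀ X₁ : Type*}
    [NormedAddCommGroup X] [NormedSpace ℝ X] [CompleteSpace X]
    [NormedAddCommGroup X₀] [NormedSpace ℝ X₀] [CompleteSpace X₀]
    [NormedAddCommGroup X₁] [NormedSpace ℝ X₁] [CompleteSpace X₁]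
    -- the dense nest X₁ ⊆ X₀ ⊆ X
    (ι₀ : X₀ →L[ℝ] X) (hι₀inj : Function.Injective ι₀) (hι₀dense : DenseRange ι₀)
    (ι₁ : X₁ →L[ℝ] X₀) (hι₁inj : Function.Injective ι₁) (hι₁dense : DenseRange ι₁)
    (W U V : Set X₀) (hW : IsOpen W) (hU : IsOpen U) (hV : IsOpen V)
    (S Q : X₀ → X₀) (hSbij : BijOn S W U) (hQbij : BijOn Q U V)
    (AS AQ AQS : X₀ → (X →L[ℝ] X))
    -- differentiability along X₀ into X with X-extended derivatives
    (hSd : ∀ w ∈ W, HasFDerivWithinAt (fun y => ι₀ (S y)) ((AS w).comp ι₀) W w)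
    (hQd : ∀ u ∈ U, HasFDerivWithinAt (fun y => ι₀ (Q y)) ((AQ u).comp ι₀) U u)
    (hQSd : ∀ w ∈ W, HasFDerivWithinAt (fun y => ι₀ (Q (S y))) ((AQS w).comp ι₀) W w)
    -- continuity of the derivative assignments
    (hASc : ContinuousOn AS W) (hAQc : ContinuousOn AQ U) (hAQSc : ContinuousOn AQS W)
    -- X₁-part conditions
    (hSX₁ : MapsTo S (W ∩ range ι₁) (range ι₁)) (hQX₁ : MapsTo Q (U ∩ range ι₁) (range ι₁))
    (hWdense : W ⊆ closure (W ∩ range ι₁)) (hUdense : U ⊆ closure (U ∩ range ι₁))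
    (BS BQ : X₁ → (X₁ →L[ℝ] X₀))
    (hBS : ∀ z : X₁, ι₁ z ∈ W → ι₀.comp (BS z) = ((AS (ι₁ z)).comp ι₀).comp ι₁)
    (hSd₁ : ∀ z : X₁, ι₁ z ∈ W →
      HasFDerivWithinAt (fun z' : X₁ => S (ι₁ z')) (BS z) (ι₁ ⁻¹' W) z)
    (hBQ : ∀ z : X₁, ι₁ z ∈ U → ι₀.comp (BQ z) = ((AQ (ι₁ z)).comp ι₀).comp ι₁)
    (hQd₁ : ∀ z : X₁, ι₁ z ∈ U →
      HasFDerivWithinAt (fun z' : X₁ => Q (ι₁ z')) (BQ z) (ι₁ ⁻¹' U) z)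
    -- in particular, the chain rule for the X-extended derivatives
    (hchain : ∀ w ∈ W, AQS w = (AQ (S w)).comp (AS w))
    -- the curve
    (ε : ℝ) (hε : 0 < ε) (w₀ : X₀) (hw₀ : w₀ ∈ W)
    (c : ℝ → X₀) (hc : ∀ t ∈ Ioo (-ε) ε, c t ∈ W) (hc0 : c 0 = w₀)
    (c' : X₀) (hcd : HasDerivWithinAt c c' (Ioo (-ε) ε) 0) :
    ∃ d : X,
      HasDerivWithinAt (fun t => ι₀ (S (c t))) d (Ioo (-ε) ε) 0 ∧
      HasDerivWithinAt (fun t => ι₀ (Q (S (c t)))) ((AQ (S w₀)) d) (Ioo (-ε) ε) 0 := by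
  subst hc0
  refine ⟨AS (c 0) (ι₀ c'), ?_, ?_⟩
  · have h1 := (hSd _ hw₀).comp_hasDerivWithinAt (x := 0) hcd (fun t ht => hc t ht)
    simpa [Function.comp_def] using h1
  · have h2 := (hQSd _ hw₀).comp_hasDerivWithinAt (x := 0) hcd (fun t ht => hc t ht)
    rw [hchain _ hw₀] at h2
    simpa [Function.comp_def] using h2
end

section
/- Let X₀ ⊆ X ⊆ X̃ be a dense nest of Banach spaces (X₀ densely and continuously embedded in X, and X densely and continuously embedded in X̃). Let U ⊆ X be open in the X-norm topology and g : U → X a map. Assume: for every u ∈ U there is Ã(u) ∈ L(X̃) such that g is differentiable at u along X with X̃-extended derivative Ã(u), i.e. ‖g(u') − g(u) − Ã(u)(u' − u)‖_{X̃} = o(‖u' − u‖_X) as u' → u in U; and for every u ∈ U ∩ X₀ the operator Ã(u) maps X into X with restriction A(u) ∈ L(X). Let w₀ ∈ U ∩ X₀, ε > 0, and let c : (−ε, ε) → U be a curve with c(0) = w₀ that is differentiable at t = 0 as a map into X. Then g∘c is differentiable at t = 0 as a map into X̃ with (g∘c)'(0) = Ã(w₀)(c'(0)) = A(w₀)(c'(0))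 ∈ X; in particular, if g∘c is differentiable at t = 0 as a map into X, then its derivative in X equals A(w₀)(c'(0)). -/
open Set Filter Topology Asymptotics

/-- Chart-level formulation of Lemma 2.8: for a dense nest `X₀ ⊆ X ⊆ X̃` (shell situation),
if `g` is differentiable along `X` into `X̃` at each point of the open set `U ⊆ X` with
`X̃`-extended derivative `Ã(u)` whose restriction at points of `U ∩ X₀` is `A(u) ∈ L(X)`,
and `c` is a curve through `w₀ ∈ U ∩ X₀` differentiable at `t = 0` into `X`, then `g ∘ c`
is differentiable at `t = 0` into `X̃` with derivative `Ã(w₀)(c'(0)) = A(w₀)(c'(0)) ∈ X`;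
in particular any derivative of `g ∘ c` in `X` equals `A(w₀)(c'(0))`. -/
theorem shell_curve_differentiable
    {X₀ X Xt : Type*}
    [NormedAddCommGroup X₀] [NormedSpace ℝ X₀] [CompleteSpace X₀]
    [NormedAddCommGroup X] [NormedSpace ℝ X] [CompleteSpace X]
    [NormedAddCommGroup Xt] [NormedSpace ℝ Xt] [CompleteSpace Xt]
    -- the dense nest X₀ ⊆ X ⊆ X̃
    (ι : X₀ →L[ℝ] X) (hιinj : Function.Injective ι) (hιdense : DenseRange ι)
    (j : X →L[ℝ] Xt) (hjinj : Function.Injective j) (hjdense : DenseRange j)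
    (U : Set X) (hU : IsOpen U)
    (g : X → X)
    (At : X → (Xt →L[ℝ] Xt))
    (hgd : ∀ u ∈ U, HasFDerivWithinAt (fun y => j (g y)) ((At u).comp j) U u)
    (A : X → (X →L[ℝ] X))
    (hA : ∀ u ∈ U, u ∈ range ι → j.comp (A u) = (At u).comp j)
    (w₀ : X) (hw₀U : w₀ ∈ U) (hw₀₀ : w₀ ∈ range ι)
    (ε : ℝ) (hε : 0 < ε)
    (c : ℝ → X) (hc : ∀ t ∈ Ioo (-ε) ε, c t ∈ U) (hc0 : c 0 = w₀)
    (c' : X) (hcd : HasDerivWithinAt c c' (Ioo (-ε) ε) 0) :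
    HasDerivWithinAt (fun t => j (g (c t))) (j ((A w₀) c')) (Ioo (-ε) ε) 0 ∧
    ∀ d : X, HasDerivWithinAt (fun t => g (c t)) d (Ioo (-ε) ε) 0 → d = (A w₀) c' := by
  have h0 : (0:ℝ) ∈ Ioo (-ε) ε := ⟨by linarith, hε⟩
  have hgw : HasFDerivWithinAt (fun y => j (g y)) ((At w₀).comp j) U w₀ := hgd w₀ hw₀U
  have hmaps : MapsTo c (Ioo (-ε) ε) U := fun t ht => hc t ht
  have hcw : c 0 = w₀ := hc0
  have hcomp : HasDerivWithinAt (fun t => j (g (c t))) (((At w₀).comp j) c') (Ioo (-ε) ε) 0 := by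
    rw [← hc0] at hgw
    simpa [Function.comp_def, hc0] using hgw.comp_hasDerivWithinAt 0 hcd hmaps
  have hkey : j ((A w₀) c') = ((At w₀).comp j) c' := by
    have := hA w₀ hw₀U hw₀₀
    calc j ((A w₀) c') = (j.comp (A w₀)) c' := rfl
      _ = ((At w₀).comp j) c' := by rw [this]
  constructor
  · rw [hkey]; exact hcomp
  · intro d hd
    have hjd : HasDerivWithinAt (fun t => j (g (c t))) (j d) (Ioo (-ε) ε) 0 :=
      j.hasFDerivAt.comp_hasDerivWithinAt 0 hd
    have huniq : UniqueDiffWithinAt ℝ (Ioo (-ε) ε) (0:ℝ) :=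
      (isOpen_Ioo.uniqueDiffWithinAt h0)
    have : j d = j ((A w₀) c') := by
      have h2 : HasDerivWithinAt (fun t => j (g (c t))) (j ((A w₀) c')) (Ioo (-ε) ε) 0 := by
        rw [hkey]; exact hcomp
      rw [← hjd.derivWithin huniq, ← h2.derivWithin huniq]
    exact hjinj this
end

section
/- Let X₁ ⊆ X₀ ⊆ X be a dense nest of Banach spaces. Let V₀ ⊆ X₀ be open, V₁ = V₀ ∩ X₁, and assume V₁ is dense in V₀ (X₀-norm). Let Φ : V₀ → X₀ be injective with U₀ := Φ(V₀) open in X₀ and Φ(V₁) ⊆ X₁, and let Ψ : V₀ → L(X) be such that every Ψ(y) is invertible in L(X). Let F_U : U₀ → X and define F_V : V₀ → X by F_V(y) = Ψ(y)(F_U(Φ(y))). Assume: (i) for every y ∈ V₁, Ψ(y)⁻¹ maps X₀ into X₀, and the restriction of Φ to V₁ is differentiable at y along X₁ into X₀ with derivative z ↦ Ψ(y)⁻¹ z; (ii) for every y ∈ V₁, the map Ψ : V₀ → L(X) is differentiable at y along X₀ with X-extended derivative Ψ'(y) ∈ L(X, L(X)); (iii) for every x ∈ U₀, F_U is Fréchet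 differentiable at x as a map from U₀ (X₀-topology) into X, with derivative F_U'(x) ∈ L(X₀, X); (iv) for every y ∈ V₀, F_V is Fréchet differentiable at y as a map from V₀ into X, with derivative F_V'(y) ∈ L(X₀, X); (v) for every y ∈ V₁, the map z ↦ Ψ(y)(F_U'(Φ(y))(Ψ(y)⁻¹ z)) is bounded from X₀ to X. Then for every y ∈ V₁ and every z ∈ X₀: F_V'(y) z = Ψ(y)(F_U'(Φ(y))(Ψ(y)⁻¹ z)) + (Ψ'(y) z)(F_U(Φ(y))). -/
open Set Filter Topology Asymptotics

/-- Chart-level formulation of Lemma 3.3, the transformation rule (3.4): if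
`F_V(y) = Ψ(y)(F_U(Φ(y)))` for a chart transition `Φ` with inverse transition derivative
`Ψ(y)⁻¹`, then at every point `y` of the inner kernel part `V₁ = V₀ ∩ X₁` and every
`z ∈ X₀`, `F_V'(y) z = Ψ(y)(F_U'(Φ(y))(Ψ(y)⁻¹ z)) + (Ψ'(y) z)(F_U(Φ(y)))`. -/
theorem vector_field_representation_rule
    {X X₀ X₁ : Type*}
    [NormedAddCommGroup X] [NormedSpace ℝ X] [CompleteSpace X]
    [NormedAddCommGroup X₀] [NormedSpace ℝ X₀] [CompleteSpace X₀]
    [NormedAddCommGroup X₁] [NormedSpace ℝ X₁] [CompleteSpace X₁]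
    -- the dense nest X₁ ⊆ X₀ ⊆ X
    (ι₀ : X₀ →L[ℝ] X) (hι₀inj : Function.Injective ι₀) (hι₀dense : DenseRange ι₀)
    (ι₁ : X₁ →L[ℝ] X₀) (hι₁inj : Function.Injective ι₁) (hι₁dense : DenseRange ι₁)
    (V₀ : Set X₀) (hV₀ : IsOpen V₀)
    (hV₁dense : V₀ ⊆ closure (V₀ ∩ range ι₁))
    (Φ : X₀ → X₀) (hΦinj : InjOn Φ V₀) (hU₀open : IsOpen (Φ '' V₀))
    (hΦX₁ : MapsTo Φ (V₀ ∩ range ι₁) (range ι₁))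
    (Ψ Ψinv : X₀ → (X →L[ℝ] X))
    (hinv : ∀ y ∈ V₀, (Ψ y).comp (Ψinv y) = ContinuousLinearMap.id ℝ X ∧
                      (Ψinv y).comp (Ψ y) = ContinuousLinearMap.id ℝ X)
    (FU FV : X₀ → X)
    (hFV : ∀ y ∈ V₀, FV y = Ψ y (FU (Φ y)))
    -- (i) Ψ(y)⁻¹ maps X₀ into X₀ with restriction Pinv₀ y, and the restriction of Φ to V₁
    -- is differentiable along X₁ into X₀ with derivative z ↦ Ψ(y)⁻¹ z
    (Pinv₀ : X₀ → (X₀ →L[ℝ] X₀))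
    (hPinv₀ : ∀ z : X₁, ι₁ z ∈ V₀ →
      ι₀.comp (Pinv₀ (ι₁ z)) = (Ψinv (ι₁ z)).comp ι₀)
    (hΦd₁ : ∀ z : X₁, ι₁ z ∈ V₀ →
      HasFDerivWithinAt (fun z' : X₁ => Φ (ι₁ z')) ((Pinv₀ (ι₁ z)).comp ι₁) (ι₁ ⁻¹' V₀) z)
    -- (ii) Ψ is differentiable along X₀ with X-extended derivative Ψ'(y) ∈ L(X, L(X))
    (Ψ' : X₀ → (X →L[ℝ] (X →L[ℝ] X)))
    (hΨd : ∀ z : X₁, ι₁ z ∈ V₀ → HasFDerivWithinAt Ψ ((Ψ' (ι₁ z)).comp ι₀) V₀ (ι₁ z))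
    -- (iii) F_U Fréchet differentiable on U₀ = Φ '' V₀
    (FU' : X₀ → (X₀ →L[ℝ] X))
    (hFUd : ∀ x ∈ Φ '' V₀, HasFDerivWithinAt FU (FU' x) (Φ '' V₀) x)
    -- (iv) F_V Fréchet differentiable on V₀
    (FV' : X₀ → (X₀ →L[ℝ] X))
    (hFVd : ∀ y ∈ V₀, HasFDerivWithinAt FV (FV' y) V₀ y) :
    ∀ z : X₁, ι₁ z ∈ V₀ → ∀ w : X₀,
      FV' (ι₁ z) w
        = Ψ (ι₁ z) (FU' (Φ (ι₁ z)) (Pinv₀ (ι₁ z) w))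
          + (Ψ' (ι₁ z) (ι₀ w)) (FU (Φ (ι₁ z))) := by
  intro z hz w
  set y := ι₁ z with hy
  have hopen : IsOpen (ι₁ ⁻¹' V₀) := hV₀.preimage ι₁.continuous
  have hzmem : z ∈ ι₁ ⁻¹' V₀ := hz
  have hnhds : ι₁ ⁻¹' V₀ ∈ 𝓝 z := hopen.mem_nhds hzmem
  -- derivative of FV ∘ ι₁
  have hA : HasFDerivAt (fun z' : X₁ => FV (ι₁ z')) ((FV' y).comp ι₁) z := by
    have := (hFVd y hz).comp z ι₁.hasFDerivAt.hasFDerivWithinAt (fun x hx => hx)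
    exact this.hasFDerivAt hnhds
  -- derivative via the product formula
  have hΨ1 : HasFDerivWithinAt (fun z' : X₁ => Ψ (ι₁ z'))
      (((Ψ' y).comp ι₀).comp ι₁) (ι₁ ⁻¹' V₀) z :=
    (hΨd z hz).comp z ι₁.hasFDerivAt.hasFDerivWithinAt (fun x hx => hx)
  have hΦmaps : MapsTo (fun z' : X₁ => Φ (ι₁ z')) (ι₁ ⁻¹' V₀) (Φ '' V₀) :=
    fun x hx => mem_image_of_mem Φ hx
  have hFU1 : HasFDerivWithinAt (fun z' : X₁ => FU (Φ (ι₁ z')))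
      ((FU' (Φ y)).comp ((Pinv₀ y).comp ι₁)) (ι₁ ⁻¹' V₀) z :=
    (hFUd (Φ y) (mem_image_of_mem Φ hz)).comp z (hΦd₁ z hz) hΦmaps
  have hB0 : HasFDerivWithinAt (fun z' : X₁ => Ψ (ι₁ z') (FU (Φ (ι₁ z'))))
      (((Ψ y).comp ((FU' (Φ y)).comp ((Pinv₀ y).comp ι₁)))
        + ((((Ψ' y).comp ι₀).comp ι₁).flip (FU (Φ y)))) (ι₁ ⁻¹' V₀) z :=
    hΨ1.clm_apply hFU1
  have hB : HasFDerivAt (fun z' : X₁ => FV (ι₁ z'))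
      (((Ψ y).comp ((FU' (Φ y)).comp ((Pinv₀ y).comp ι₁)))
        + ((((Ψ' y).comp ι₀).comp ι₁).flip (FU (Φ y)))) z := by
    refine (hB0.congr (fun x hx => ?_) ?_).hasFDerivAt hnhds
    · exact hFV (ι₁ x) hx
    · exact hFV y hz
  have heq := hA.unique hB
  -- extend by density from range ι₁ to all of X₀
  have key : ∀ w : X₀, FV' y w
      = Ψ y (FU' (Φ y) (Pinv₀ y w)) + (Ψ' y (ι₀ w)) (FU (Φ y)) := by
    have hcont1 : Continuous fun w : X₀ => FV' y w := (FV' y).continuous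
    have hcont2 : Continuous fun w : X₀ =>
        Ψ y (FU' (Φ y) (Pinv₀ y w)) + (Ψ' y (ι₀ w)) (FU (Φ y)) := by
      apply Continuous.add
      · exact (Ψ y).continuous.comp ((FU' (Φ y)).continuous.comp (Pinv₀ y).continuous)
      · exact (ContinuousLinearMap.apply ℝ X (FU (Φ y))).continuous.comp
          ((Ψ' y).continuous.comp ι₀.continuous)
    refine fun w' => congrFun (hι₁dense.equalizer hcont1 hcont2 ?_) w'
    funext v
    have := congrArg (fun T : X₁ →L[ℝ] X => T v) heq
    simpa using this
  exact key w
end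

section
/- Let X₀ be a densely embedded Banach subspace of a Banach space X. Let V₀, U₀ ⊆ X₀ be open, Φ : V₀ → U₀ a map, and Ψ : V₀ → L(X) with every Ψ(y) invertible in L(X). Let F_U : U₀ → X and define F_V : V₀ → X by F_V(y) = Ψ(y)(F_U(Φ(y))) for all y ∈ V₀. Let y* ∈ V₀ and x* = Φ(y*), and assume: F_U(x*) = 0; F_U is Fréchet differentiable at x* as a map from U₀ (X₀-topology) into X, with derivative F_U'(x*) ∈ L(X₀, X); Φ is Fréchet differentiable at y* as a map from V₀ into X₀, with derivative D ∈ L(X₀) satisfying ι ∘ D = Ψ(y*)⁻¹ ∘ ι (i.e. D is the restriction of Ψ(y*)⁻¹ to X₀, which in particular maps X₀ into X₀); and Ψ is continuous at y* as a map from V₀ (X₀-topology) into L(X). Then F_V is Fréchet differentiable at y* as a map from V₀ into X, and F_V'(y*) = Ψ(y*) ∘ F_U'(x*) ∘ D; that is, F_V'(y*) z = Ψ(y*)(F_U'(x*)(Ψ(y*)⁻¹ z)) for every z ∈ X₀. -/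
open Set Filter Topology Asymptotics

/-- Chart-level formulation of Corollary 3.5: at a zero `x* = Φ(y*)` of `F_U`, the
representation `F_V(y) = Ψ(y)(F_U(Φ(y)))` is Fréchet differentiable at `y*` with
derivative `F_V'(y*) = Ψ(y*) ∘ F_U'(x*) ∘ Ψ(y*)⁻¹|_{X₀}`. -/
theorem linearization_similar_at_zero
    {X X₀ : Type*}
    [NormedAddCommGroup X] [NormedSpace ℝ X] [CompleteSpace X]
    [NormedAddCommGroup X₀] [NormedSpace ℝ X₀] [CompleteSpace X₀]
    (ι : X₀ →L[ℝ] X) (hιinj : Function.Injective ι) (hιdense : DenseRange ι)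
    (V₀ U₀ : Set X₀) (hV₀ : IsOpen V₀) (hU₀ : IsOpen U₀)
    (Φ : X₀ → X₀) (hΦ : MapsTo Φ V₀ U₀)
    (Ψ Ψinv : X₀ → (X →L[ℝ] X))
    (hinv : ∀ y ∈ V₀, (Ψ y).comp (Ψinv y) = ContinuousLinearMap.id ℝ X ∧
                      (Ψinv y).comp (Ψ y) = ContinuousLinearMap.id ℝ X)
    (FU FV : X₀ → X)
    (hFV : ∀ y ∈ V₀, FV y = Ψ y (FU (Φ y)))
    (ystar : X₀) (hystar : ystar ∈ V₀)
    (hFU0 : FU (Φ ystar) = 0)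
    (FU' : X₀ →L[ℝ] X) (hFUd : HasFDerivWithinAt FU FU' U₀ (Φ ystar))
    (D : X₀ →L[ℝ] X₀) (hΦd : HasFDerivWithinAt Φ D V₀ ystar)
    -- D is the restriction of Ψ(y*)⁻¹ to X₀
    (hD : ι.comp D = (Ψinv ystar).comp ι)
    (hΨc : ContinuousWithinAt Ψ V₀ ystar) :
    HasFDerivWithinAt FV (((Ψ ystar).comp FU').comp D) V₀ ystar := by
  set G : X₀ → X := fun y => FU (Φ y) with hGdef
  have hG : HasFDerivWithinAt G (FU'.comp D) V₀ ystar := hFUd.comp ystar hΦd hΦ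
  have hG0 : G ystar = 0 := hFU0
  -- reduce to the function y ↦ Ψ y (G y)
  have key : HasFDerivWithinAt (fun y => Ψ y (G y)) (((Ψ ystar).comp FU').comp D) V₀ ystar := by
    apply HasFDerivWithinAt.of_isLittleO
    have hGo : (fun y => G y - G ystar - (FU'.comp D) (y - ystar)) =o[𝓝[V₀] ystar]
        fun y => y - ystar := hG.isLittleO
    have hGO : (fun y => G y) =O[𝓝[V₀] ystar] fun y => y - ystar := by
      simpa [hG0] using hG.isBigO_sub
    have hΨo : (fun y => Ψ y - Ψ ystar) =o[𝓝[V₀] ystar] (fun _ => (1:ℝ)) := by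
      rw [isLittleO_one_iff]
      simpa only [sub_self] using (show Tendsto (fun y => Ψ y - Ψ ystar) (𝓝[V₀] ystar) (𝓝 (Ψ ystar - Ψ ystar)) from hΨc.sub continuousWithinAt_const)
    have hA : (fun y => (Ψ y - Ψ ystar) (G y)) =o[𝓝[V₀] ystar] fun y => y - ystar := by
      calc (fun y => (Ψ y - Ψ ystar) (G y))
          =O[𝓝[V₀] ystar] (fun y => ‖Ψ y - Ψ ystar‖ * ‖G y‖) := by
            apply IsBigO.of_bound 1
            filter_upwards with y
            simpa using (Ψ y - Ψ ystar).le_opNorm (G y)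
        _ =o[𝓝[V₀] ystar] (fun y => (1:ℝ) * ‖y - ystar‖) := hΨo.norm_left.mul_isBigO hGO.norm_norm
        _ = fun y => ‖y - ystar‖ := by simp
        _ =O[𝓝[V₀] ystar] fun y => y - ystar := (isBigO_refl _ _).norm_left
    have hB : (fun y => Ψ ystar (G y - G ystar - (FU'.comp D) (y - ystar)))
        =o[𝓝[V₀] ystar] fun y => y - ystar :=
      ((Ψ ystar).isBigO_comp _ _).trans_isLittleO hGo
    have := hA.add hB
    apply this.congr' ?_ (by rfl)
    filter_upwards with y
    simp [hG0, ContinuousLinearMap.sub_apply]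
  exact key.congr (fun y hy => hFV y hy) (hFV ystar hystar)
end

section
/- Let n ≥ 2 be an integer and let γ, μ, R be real numbers with 0 < μ < γ and R > 0; set q = μ/γ ∈ (0,1). For each integer k ≥ 2 define λ_k = k² + (n − 2)k and μ_k = −(γ/R²) · ((λ_k − n + 1)/(n − 1)) · ((k + n − 2)·(1 − q^{2k+n−2})) / (1 + (n − 2)/k + q^{2k+n−2}). Then μ_k < 0 for every integer k ≥ 2, and the sequence (μ_k)_{k ≥ 2} is strictly decreasing: μ_{k+1} < μ_k for all k ≥ 2. In particular, the supremum of {μ_k : k ≥ 2} equals μ₂ and is negative. -/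
/-- The eigenvalues `λ_k = k² + (n − 2)k` of the negative Laplace–Beltrami operator
on the unit sphere `𝕊^{n−1}`. -/
noncomputable def lamEig (n k : ℕ) : ℝ := (k : ℝ) ^ 2 + ((n : ℝ) - 2) * k

/-- The nonzero eigenvalues `μ_k` (Lemma 5.4) of the linearization `F'(0)` at the radially
symmetric stationary solution of the two-free-surface Hele-Shaw problem, with `q = μ/γ`. -/
noncomputable def muEig (n : ℕ) (γ R q : ℝ) (k : ℕ) : ℝ :=
  -(γ / R ^ 2) * ((lamEig n k - (n : ℝ) + 1) / ((n : ℝ) - 1)) *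
    (((k : ℝ) + (n : ℝ) - 2) * (1 - q ^ (2 * k + n - 2)) /
      (1 + ((n : ℝ) - 2) / (k : ℝ) + q ^ (2 * k + n - 2)))

noncomputable def Pfun (n : ℕ) (q : ℝ) (k : ℕ) : ℝ :=
  ((lamEig n k - (n : ℝ) + 1) / ((n : ℝ) - 1)) *
    (((k : ℝ) + (n : ℝ) - 2) * (1 - q ^ (2 * k + n - 2)) /
      (1 + ((n : ℝ) - 2) / (k : ℝ) + q ^ (2 * k + n - 2)))

lemma muEig_eq (n : ℕ) (γ R q : ℝ) (k : ℕ) :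
    muEig n γ R q k = -(γ / R ^ 2) * Pfun n q k := by
  unfold muEig Pfun; ring

section aux
variable {n k : ℕ} {q : ℝ}

lemma Pfun_pos (hn : 2 ≤ n) (hk : 2 ≤ k) (hq0 : 0 < q) (hq1 : q < 1) :
    0 < Pfun n q k := by
  have hkr : (2:ℝ) ≤ (k:ℝ) := by exact_mod_cast hk
  have hnr : (2:ℝ) ≤ (n:ℝ) := by exact_mod_cast hn
  have hqe0 : 0 < q ^ (2 * k + n - 2) := pow_pos hq0 _
  have hqe1 : q ^ (2 * k + n - 2) < 1 :=
    pow_lt_one₀ hq0.le hq1 (by omega)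
  have hA : 0 < (lamEig n k - (n : ℝ) + 1) / ((n : ℝ) - 1) := by
    apply div_pos
    · unfold lamEig; nlinarith
    · linarith
  have hN : 0 < ((k : ℝ) + (n : ℝ) - 2) * (1 - q ^ (2 * k + n - 2)) := by
    apply mul_pos <;> linarith
  have hD : 0 < 1 + ((n : ℝ) - 2) / (k : ℝ) + q ^ (2 * k + n - 2) := by
    have : 0 ≤ ((n : ℝ) - 2) / (k : ℝ) := div_nonneg (by linarith) (by linarith)
    linarith
  exact mul_pos hA (div_pos hN hD)

lemma Pfun_lt (hn : 2 ≤ n) (hk : 2 ≤ k) (hq0 : 0 < q) (hq1 : q < 1) :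
    Pfun n q k < Pfun n q (k + 1) := by
  have hkr : (2:ℝ) ≤ (k:ℝ) := by exact_mod_cast hk
  have hnr : (2:ℝ) ≤ (n:ℝ) := by exact_mod_cast hn
  have he' : 2 * (k + 1) + n - 2 = (2 * k + n - 2) + 2 := by omega
  set e := 2 * k + n - 2 with hedef
  have hqe0 : 0 < q ^ e := pow_pos hq0 _
  have hqe1 : q ^ e < 1 := pow_lt_one₀ hq0.le hq1 (by omega)
  have hqlt : q ^ (e + 2) < q ^ e := by
    have : q ^ (e + 2) = q ^ e * q ^ 2 := by ring
    rw [this]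
    nlinarith [mul_lt_mul_of_pos_left (show q^2 < 1 by nlinarith) hqe0]
  have hqe20 : 0 < q ^ (e + 2) := pow_pos hq0 _
  unfold Pfun lamEig
  rw [he']
  push_cast
  set kr := (k:ℝ)
  set nr := (n:ℝ)
  have hA : (kr ^ 2 + (nr - 2) * kr - nr + 1) / (nr - 1) <
      ((kr + 1) ^ 2 + (nr - 2) * (kr + 1) - nr + 1) / (nr - 1) := by
    have hd : (0:ℝ) < nr - 1 := by linarith
    rw [div_lt_div_iff₀ hd hd]
    nlinarith
  have hN : (kr + nr - 2) * (1 - q ^ e) < (kr + 1 + nr - 2) * (1 - q ^ (e + 2)) := by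
    nlinarith
  have hD : 1 + (nr - 2) / (kr + 1) + q ^ (e + 2) < 1 + (nr - 2) / kr + q ^ e := by
    have : (nr - 2) / (kr + 1) ≤ (nr - 2) / kr :=
      div_le_div_of_nonneg_left (by linarith) (by linarith) (by linarith)
    linarith
  have hDpos : (0:ℝ) < 1 + (nr - 2) / (kr + 1) + q ^ (e + 2) := by
    have : 0 ≤ (nr - 2) / (kr + 1) := div_nonneg (by linarith) (by linarith)
    linarith
  have hDpos' : (0:ℝ) < 1 + (nr - 2) / kr + q ^ e := by
    have : 0 ≤ (nr - 2) / kr := div_nonneg (by linarith) (by linarith)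
    linarith
  have hNpos : 0 < (kr + nr - 2) * (1 - q ^ e) := mul_pos (by linarith) (by linarith)
  have hB : (kr + nr - 2) * (1 - q ^ e) / (1 + (nr - 2) / kr + q ^ e) <
      (kr + 1 + nr - 2) * (1 - q ^ (e + 2)) / (1 + (nr - 2) / (kr + 1) + q ^ (e + 2)) := by
    rw [div_lt_div_iff₀ hDpos' hDpos]
    calc (kr + nr - 2) * (1 - q ^ e) * (1 + (nr - 2) / (kr + 1) + q ^ (e + 2))
        < (kr + 1 + nr - 2) * (1 - q ^ (e + 2)) * (1 + (nr - 2) / (kr + 1) + q ^ (e + 2)) :=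
          mul_lt_mul_of_pos_right hN hDpos
      _ < (kr + 1 + nr - 2) * (1 - q ^ (e + 2)) * (1 + (nr - 2) / kr + q ^ e) :=
          mul_lt_mul_of_pos_left hD (by nlinarith)
  have hApos : 0 < (kr ^ 2 + (nr - 2) * kr - nr + 1) / (nr - 1) :=
    div_pos (by nlinarith) (by linarith)
  have hBpos : 0 < (kr + nr - 2) * (1 - q ^ e) / (1 + (nr - 2) / kr + q ^ e) :=
    div_pos hNpos hDpos'
  exact mul_lt_mul'' hA hB hApos.le hBpos.le
end aux

/-- Key fact in the proof of Theorem 1.2: the sequence `(μ_k)_{k ≥ 2}` is a strictly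
monotone decreasing sequence of negative numbers, so its supremum is `μ₂ < 0`. -/
theorem muEig_neg_strict_anti (n : ℕ) (hn : 2 ≤ n)
    (γ μ R : ℝ) (hμ : 0 < μ) (hμγ : μ < γ) (hR : 0 < R)
    (q : ℝ) (hq : q = μ / γ) :
    (∀ k : ℕ, 2 ≤ k → muEig n γ R q k < 0) ∧
    (∀ k : ℕ, 2 ≤ k → muEig n γ R q (k + 1) < muEig n γ R q k) ∧
    IsGreatest {x : ℝ | ∃ k : ℕ, 2 ≤ k ∧ x = muEig n γ R q k} (muEig n γ R q 2) ∧
    muEig n γ R q 2 < 0 := by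

  have hγ : 0 < γ := hμ.trans hμγ
  have hq0 : 0 < q := hq ▸ div_pos hμ hγ
  have hq1 : q < 1 := hq ▸ (div_lt_one hγ).mpr hμγ
  have hC : 0 < γ / R ^ 2 := div_pos hγ (by positivity)
  have hneg : ∀ k : ℕ, 2 ≤ k → muEig n γ R q k < 0 := by
    intro k hk
    rw [muEig_eq]
    have := Pfun_pos hn hk hq0 hq1
    nlinarith
  have hstep : ∀ k : ℕ, 2 ≤ k → muEig n γ R q (k + 1) < muEig n γ R q k := by
    intro k hk
    rw [muEig_eq, muEig_eq]
    have := Pfun_lt hn hk hq0 hq1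
    nlinarith
  refine ⟨hneg, hstep, ⟨⟨2, le_refl 2, rfl⟩, ?_⟩, hneg 2 le_rfl⟩
  rintro x ⟨k, hk, rfl⟩
  induction k with
  | zero => omega
  | succ m ih =>
    rcases Nat.lt_or_ge 2 (m + 1) with h | h
    · exact le_trans (hstep m (by omega)).le (ih (by omega))
    · have : m + 1 = 2 := by omega
      rw [this]
end
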